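/- A maximal subgroup of a finite group that is a non-identity core-free maximal 2-subgroup is a Sylow 2-subgroup. -/

import Mathlib

/-- A maximal subgroup of a finite group that is a non-identity core-free
2-subgroup is a Sylow 2-subgroup. -/
theorem stmt13 {G : Type*} [Group G] [Fintype G] (H : Subgroup G)
    (hmax : IsCoatom H) (h2 : IsPGroup 2 H) (hbot : H ≠ ⊥)
    (hcore : H.normalCore = ⊥) :
    ∃ P : Sylow 2 G, (P : Subgroup G) = H := by
  haveI : Fact (Nat.Prime 2) := ⟨Nat.prime_two⟩
  -- H is self-normalizing
  have hnorm : Subgroup.normalizer (H : Set G) = H := by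
    rcases eq_or_lt_of_le H.le_normalizer with h | h
    · exact h.symm
    · exfalso
      have htop : Subgroup.normalizer (H : Set G) = ⊤ := hmax.2 _ h
      haveI : H.Normal := Subgroup.normalizer_eq_top_iff.mp htop
      rw [H.normalCore_eq_self] at hcore
      exact hbot hcore
  obtain ⟨P, hHP⟩ := h2.exists_le_sylow
  have key : Subgroup.normalizer ((H.subgroupOf (P : Subgroup G)) : Set ↥(P : Subgroup G)) = H.subgroupOf (P : Subgroup G) := by
    rw [← Subgroup.subgroupOf_normalizer_eq (by exact hHP), hnorm]
  haveI : Group.IsNilpotent ↥(P : Subgroup G) := P.isPGroup'.isNilpotent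
  have hnc : NormalizerCondition (P : Subgroup G) :=
    normalizerCondition_of_isNilpotent
  have htop : H.subgroupOf (P : Subgroup G) = ⊤ :=
    normalizerCondition_iff_only_full_group_self_normalizing.mp hnc _ key
  have hPH : (P : Subgroup G) ≤ H := by
    rwa [Subgroup.subgroupOf_eq_top] at htop
  exact ⟨P, le_antisymm hPH hHP⟩
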